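/- Let a, n be natural numbers with 1 ≤ a ≤ n−1, and set b = n−a. Then, as real numbers, p(n,a) + p(n,b) − (2/(n−1))·(choose(n,a))⁻¹ = 2n·(1/(a(a+1)) + 1/(b(b+1)) − 1/((n−1)·n))·(choose(n,a))⁻¹. (This is the identity establishing the formula for the probability q_n(a) that a fixed a-element subset is a clan of an unrooted Yule–Harding–Kingman tree.) -/

import Mathlib

/-- `p n a` : probability that a fixed `a`-element subset of an `n`-set is a clade
of a YHK tree (for `1 ≤ a ≤ n - 1`). -/
noncomputable def p (n a : ℕ) : ℝ :=
  (2 * (n : ℝ) / ((a : ℝ) * ((a : ℝ) + 1))) * ((n.choose a : ℝ))⁻¹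

/-- The identity establishing the formula for the probability `q_n(a)` that a fixed
`a`-element subset is a clan of an unrooted YHK tree:
`p_n(a) + p_n(n-a) - phat_n(a, n-a) = q_n(a)`. -/
theorem clan_probability_identity (a b n : ℕ) (ha : 1 ≤ a) (han : a ≤ n - 1)
    (hb : b = n - a) :
    p n a + p n b - (2 / ((n : ℝ) - 1)) * ((n.choose a : ℝ))⁻¹ =
      2 * (n : ℝ) * (1 / ((a : ℝ) * ((a : ℝ) + 1)) + 1 / ((b : ℝ) * ((b : ℝ) + 1)) -
        1 / (((n : ℝ) - 1) * (n : ℝ))) * ((n.choose a : ℝ))⁻¹ := by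
  have hn : 2 ≤ n := by omega
  have hcb : n.choose b = n.choose a := by
    rw [hb, Nat.choose_symm (by omega : a ≤ n)]
  have h1 : (n : ℝ) ≠ 0 := by positivity
  have h2 : (n : ℝ) - 1 ≠ 0 := by
    have : (2 : ℝ) ≤ (n : ℝ) := by exact_mod_cast hn
    nlinarith
  have key : (2 : ℝ) / ((n : ℝ) - 1) = 2 * n * (1 / (((n : ℝ) - 1) * n)) := by
    field_simp
  simp only [p, hcb, key]
  ring
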